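/- Let r^(1), ..., r^(ρ) ∈ (0,1)^d be pairwise incomparable points with no ties in any coordinate, and let S = ∩_{i=1}^ρ (O⁻(r^(i)))^c be the record-setting region. A point g ∈ (0,1)^d with all coordinates nonzero is a minimal element of S (with respect to the coordinatewise partial order ≤) if and only if (i) g ∈ S, and (ii) there exist d distinct indices i_1,...,i_d ∈ [ρ] such that for every j ∈ [d], g_j = r^(i_j)_j = min{r^(i_ℓ)_j : ℓ ∈ [d]}. -/
import Mathlib


/-- The record-setting region of the points `r 0, …, r (ρ-1)` within `[0,1)^d`. -/
def recordSet {d ρ : ℕ} (r : Fin ρ → Fin d → ℝ) : Set (Fin d → ℝ) :=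
  {x | (∀ j, x j ∈ Set.Ico (0:ℝ) 1) ∧ ∀ i, ¬ ∀ j, x j < r i j}

theorem interior_generator_characterization (d ρ : ℕ) (hd : 1 ≤ d)
    (r : Fin ρ → Fin d → ℝ)
    (hr : ∀ i j, r i j ∈ Set.Ioo (0:ℝ) 1)
    (hties : ∀ j : Fin d, Function.Injective (fun i => r i j))
    (hinc : ∀ i i' : Fin ρ, i ≠ i' → ¬ r i ≤ r i')
    (g : Fin d → ℝ) (hg : ∀ j, g j ∈ Set.Ioo (0:ℝ) 1) :
    (g ∈ recordSet r ∧ ∀ y ∈ recordSet r, y ≤ g → y = g) ↔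
    (g ∈ recordSet r ∧ ∃ i : Fin d → Fin ρ, Function.Injective i ∧
      ∀ j : Fin d, g j = r (i j) j ∧ ∀ ℓ : Fin d, r (i j) j ≤ r (i ℓ) j) := by
  constructor
  · rintro ⟨hgS, hmin⟩
    refine ⟨hgS, ?_⟩
    have key : ∀ j : Fin d, ∃ i : Fin ρ, g j = r i j ∧ ∀ j' : Fin d, j' ≠ j → g j' < r i j' := by
      intro j
      classical
      set c : Fin ρ → ℝ := fun i => if r i j < g j then g j - r i j else g j with hc
      set s : Finset ℝ := insert (g j) (Finset.image c Finset.univ) with hs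
      have hsne : s.Nonempty := ⟨g j, Finset.mem_insert_self _ _⟩
      set ε := s.min' hsne with hε
      have hεpos : 0 < ε := by
        rw [hε, Finset.lt_min'_iff]
        intro b hb
        rcases Finset.mem_insert.mp hb with hb | hb
        · rw [hb]; exact (hg j).1
        · obtain ⟨i, -, rfl⟩ := Finset.mem_image.mp hb
          by_cases h : r i j < g j
          · simp only [hc, if_pos h]; linarith
          · simp only [hc, if_neg h]; exact (hg j).1
      have hεg : ε ≤ g j := Finset.min'_le _ _ (Finset.mem_insert_self _ _)
      have hεc : ∀ i, ε ≤ c i := fun i =>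
        Finset.min'_le _ _ (Finset.mem_insert_of_mem (Finset.mem_image_of_mem c (Finset.mem_univ i)))
      set y : Fin d → ℝ := Function.update g j (g j - ε) with hy
      have hyj : y j = g j - ε := Function.update_self j _ g
      have hyj' : ∀ j', j' ≠ j → y j' = g j' := fun j' h => Function.update_of_ne h _ g
      have hyIco : ∀ j', y j' ∈ Set.Ico (0:ℝ) 1 := by
        intro j'
        by_cases h : j' = j
        · subst h; rw [hyj]; constructor
          · linarith
          · have := (hg j').2; linarith
        · rw [hyj' j' h]; exact ⟨le_of_lt (hg j').1, (hg j').2⟩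
      have hyne : y ≠ g := by
        intro h
        have := congrFun h j
        rw [hyj] at this
        linarith
      have hyle : y ≤ g := by
        intro j'
        by_cases h : j' = j
        · subst h; rw [hyj]; linarith
        · rw [hyj' j' h]
      have hynot : y ∉ recordSet r := fun h => hyne (hmin y h hyle)
      have hex : ∃ i : Fin ρ, ∀ j', y j' < r i j' := by
        by_contra h
        push_neg at h
        refine hynot ⟨hyIco, fun i hall => ?_⟩
        obtain ⟨j', hj'⟩ := h i
        exact absurd (hall j') (not_lt.mpr hj')
      obtain ⟨i, hi⟩ := hex
      have hstrict : ∀ j', j' ≠ j → g j' < r i j' := by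
        intro j' h
        have := hi j'
        rwa [hyj' j' h] at this
      have hge : g j ≤ r i j := by
        by_contra h
        push_neg at h
        have h1 := hεc i
        rw [hc] at h1
        simp only [if_pos h] at h1
        have := hi j
        rw [hyj] at this
        linarith
      have heq : g j = r i j := by
        rcases eq_or_lt_of_le hge with h | h
        · exact h
        · exfalso
          apply hgS.2 i
          intro j'
          by_cases hj : j' = j
          · subst hj; exact h
          · exact hstrict j' hj
      exact ⟨i, heq, hstrict⟩
    choose i hi1 hi2 using key
    refine ⟨i, ?_, ?_⟩
    · intro j ℓ h
      by_contra hne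
      have h1 := hi2 ℓ j hne
      rw [← h] at h1
      rw [hi1 j] at h1
      exact lt_irrefl _ h1
    · intro j
      refine ⟨hi1 j, ?_⟩
      intro ℓ
      by_cases h : ℓ = j
      · subst h; exact le_refl _
      · have := hi2 ℓ j (Ne.symm h)
        rw [hi1 j] at this
        exact le_of_lt this
  · rintro ⟨hgS, i, hinj, hi⟩
    refine ⟨hgS, ?_⟩
    intro y hy hyle
    by_contra hne
    have : ∃ j₀, y j₀ ≠ g j₀ := by
      by_contra h
      push_neg at h
      exact hne (funext h)
    obtain ⟨j₀, hj₀⟩ := this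
    have hlt : y j₀ < g j₀ := lt_of_le_of_ne (hyle j₀) hj₀
    apply hy.2 (i j₀)
    intro j
    by_cases h : j = j₀
    · subst h; rw [(hi j).1] at hlt; exact hlt
    · have h1 : g j = r (i j) j := (hi j).1
      have h2 : r (i j) j ≤ r (i j₀) j := (hi j).2 j₀
      have h3 : r (i j) j ≠ r (i j₀) j := fun heq =>
        h (hinj (hties j heq))
      calc y j ≤ g j := hyle j
        _ = r (i j) j := h1
        _ < r (i j₀) j := lt_of_le_of_ne h2 h3
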